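/- arXiv:2310.18915 — 2 statements merged into one kernel-verified Lean document; each statement's English description precedes it below -/
import Mathlib

section
/- Under the assumptions: fᵢ twice continuously differentiable with γᵢIₙ ⪯ ∇²fᵢ ⪯ ΓᵢIₙ (0 < γᵢ, Γᵢ), Σᵢ ∇fᵢ(xᵢ) = 0, x* the global minimizer of Σᵢ fᵢ, G connected undirected with Laplacian L, and V_M = Σᵢ [fᵢ(x*) − fᵢ(xᵢ) − ∇fᵢ(xᵢ)ᵀ(x* − xᵢ)], it holds that V_M ≤ (Γ_max/λ₂(L)) · xᵀ(L ⊗ Iₙ)x, where Γ_max = maxᵢ Γᵢ and x is the stack of the xᵢ. -/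
open Matrix Kronecker RealInnerProductSpace


lemma taylor_upper {E : Type*} [NormedAddCommGroup E] [InnerProductSpace ℝ E]
    (f : E → ℝ) (hf : ContDiff ℝ 2 f) (C : ℝ)
    (hC : ∀ y v, iteratedFDeriv ℝ 2 f y ![v, v] ≤ C * ‖v‖ ^ 2) (a b : E) :
    f b ≤ f a + fderiv ℝ f a (b - a) + C / 2 * ‖b - a‖ ^ 2 := by
  set v := b - a with hv
  have hd1 : Differentiable ℝ f := hf.differentiable two_ne_zero
  have hd2 : Differentiable ℝ (fderiv ℝ f) :=
    (hf.fderiv_right (m := 1) (by norm_num)).differentiable one_ne_zero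
  have hc : ∀ t : ℝ, HasDerivAt (fun t : ℝ => a + t • v) v t := by
    intro t
    simpa using ((hasDerivAt_id t).smul_const v).const_add a
  set c : ℝ → E := fun t => a + t • v with hcdef
  have hφ : ∀ t : ℝ, HasDerivAt (fun t => f (c t)) (fderiv ℝ f (c t) v) t := fun t =>
    (hd1.differentiableAt.hasFDerivAt).comp_hasDerivAt t (hc t)
  have hψ : ∀ t : ℝ, HasDerivAt (fun t => fderiv ℝ f (c t) v)
      (fderiv ℝ (fderiv ℝ f) (c t) v v) t := by
    intro t
    have h1 : HasDerivAt (fun t => fderiv ℝ f (c t)) (fderiv ℝ (fderiv ℝ f) (c t) v) t :=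
      (hd2.differentiableAt.hasFDerivAt).comp_hasDerivAt t (hc t)
    simpa using h1.clm_apply (hasDerivAt_const t v)
  have hbound : ∀ t : ℝ, fderiv ℝ (fderiv ℝ f) (c t) v v ≤ C * ‖v‖ ^ 2 := by
    intro t
    have := hC (c t) v
    rwa [iteratedFDeriv_two_apply] at this
  set G : ℝ → ℝ := fun t => fderiv ℝ f a v + C * ‖v‖ ^ 2 * t - fderiv ℝ f (c t) v with hGdef
  have hG : ∀ t : ℝ, HasDerivAt G (C * ‖v‖ ^ 2 - fderiv ℝ (fderiv ℝ f) (c t) v v) t := by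
    intro t
    have h1 : HasDerivAt (fun t : ℝ => fderiv ℝ f a v + C * ‖v‖ ^ 2 * t)
        (C * ‖v‖ ^ 2) t := by
      simpa using ((hasDerivAt_id t).const_mul (C * ‖v‖ ^ 2)).const_add (fderiv ℝ f a v)
    exact h1.sub (hψ t)
  have hGmono : Monotone G := by
    apply monotone_of_deriv_nonneg
    · exact fun t => (hG t).differentiableAt
    · intro t
      rw [(hG t).deriv]
      exact sub_nonneg.2 (hbound t)
  have hG0 : G 0 = 0 := by simp [hGdef, hcdef]
  set F : ℝ → ℝ := fun t => f a + t * fderiv ℝ f a v + C / 2 * ‖v‖ ^ 2 * t ^ 2 - f (c t)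
    with hFdef
  have hF : ∀ t : ℝ, HasDerivAt F (G t) t := by
    intro t
    have h1 : HasDerivAt (fun t : ℝ => f a + t * fderiv ℝ f a v + C / 2 * ‖v‖ ^ 2 * t ^ 2)
        (fderiv ℝ f a v + C * ‖v‖ ^ 2 * t) t := by
      have := (((hasDerivAt_id t).mul_const (fderiv ℝ f a v)).const_add (f a)).add
        (((hasDerivAt_pow 2 t)).const_mul (C / 2 * ‖v‖ ^ 2))
      exact this.congr_deriv (by norm_num; ring)
    exact h1.sub (hφ t)
  have hFmono : MonotoneOn F (Set.Ici (0:ℝ)) := by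
    apply monotoneOn_of_deriv_nonneg (convex_Ici 0)
      (Continuous.continuousOn (by fun_prop))
    · exact fun t ht => ((hF t).differentiableAt).differentiableWithinAt
    · intro t ht
      rw [(hF t).deriv]
      have : (0:ℝ) ≤ t := le_of_lt (by simpa using ht)
      calc (0:ℝ) = G 0 := hG0.symm
        _ ≤ G t := hGmono this
  have h01 : F 0 ≤ F 1 := hFmono (by simp) (by simp) zero_le_one
  have hF0 : F 0 = 0 := by simp [hFdef, hcdef]
  have hF1 : F 1 = f a + fderiv ℝ f a v + C / 2 * ‖v‖ ^ 2 - f b := by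
    simp [hFdef, hcdef, hv]
  rw [hF0, hF1] at h01
  linarith
open Matrix

lemma walk_const {V : Type*} {G : SimpleGraph V} (u : V → ℝ)
    (h : ∀ a b, G.Adj a b → u a = u b) {i j : V} (w : G.Walk i j) : u i = u j := by
  induction w with
  | nil => rfl
  | cons ha _ ih => exact (h _ _ ha).trans ih

lemma lap_kernel_const {N : ℕ} (A : Matrix (Fin N) (Fin N) ℝ)
    (hsymm : ∀ i j, A i j = A j i) (hnonneg : ∀ i j, 0 ≤ A i j)
    (hconn : (SimpleGraph.fromRel (fun i j : Fin N => A i j ≠ 0)).Connected)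
    (L : Matrix (Fin N) (Fin N) ℝ)
    (hL : L = Matrix.diagonal (fun i => ∑ j, A i j) - A)
    (u : Fin N → ℝ) (hu : L *ᵥ u = 0) (i j : Fin N) : u i = u j := by
  have hLu : ∀ i, ∑ j, A i j * (u i - u j) = 0 := by
    intro i
    have h0 : (L *ᵥ u) i = 0 := by rw [hu]; rfl
    rw [hL] at h0
    simp only [mulVec, dotProduct, Matrix.sub_apply, diagonal_apply, sub_mul, ite_mul, zero_mul,
      Finset.sum_sub_distrib, Finset.sum_ite_eq, Finset.mem_univ, if_pos] at h0
    calc ∑ j, A i j * (u i - u j) = (∑ j, A i j) * u i - ∑ j, A i j * u j := by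
          rw [Finset.sum_mul, ← Finset.sum_sub_distrib]
          congr 1; ext j; ring
      _ = 0 := h0
  -- quadratic form is zero
  have hQ : ∑ i, ∑ j, A i j * (u i - u j) ^ 2 = 0 := by
    have e1 : ∑ i, ∑ j, A i j * (u i - u j) ^ 2
        = ∑ i, ∑ j, A i j * (u i - u j) * u i - ∑ i, ∑ j, A i j * (u i - u j) * u j := by
      rw [← Finset.sum_sub_distrib]
      congr 1; ext i
      rw [← Finset.sum_sub_distrib]
      congr 1; ext j
      ring
    have e2 : ∑ i, ∑ j, A i j * (u i - u j) * u j
        = - ∑ i, ∑ j, A i j * (u i - u j) * u i := by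
      rw [Finset.sum_comm, ← Finset.sum_neg_distrib]
      congr 1; ext i
      rw [← Finset.sum_neg_distrib]
      congr 1; ext j
      rw [hsymm j i]
      ring
    have e3 : ∑ i, ∑ j, A i j * (u i - u j) * u i = 0 := by
      apply Finset.sum_eq_zero
      intro i _
      have : (∑ j, A i j * (u i - u j)) * u i = 0 := by rw [hLu i, zero_mul]
      rw [← this, Finset.sum_mul]
    rw [e1, e2, e3]
    ring
  have hterm : ∀ i j, A i j * (u i - u j) ^ 2 = 0 := by
    have h1 := (Finset.sum_eq_zero_iff_of_nonneg (fun i _ =>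
      Finset.sum_nonneg (fun j _ => mul_nonneg (hnonneg i j) (sq_nonneg _)))).1 hQ
    intro i j
    have h2 := (Finset.sum_eq_zero_iff_of_nonneg (fun j _ =>
      mul_nonneg (hnonneg i j) (sq_nonneg _))).1 (h1 i (Finset.mem_univ i)) j
      (Finset.mem_univ j)
    exact h2
  have hadj : ∀ a b, (SimpleGraph.fromRel (fun i j : Fin N => A i j ≠ 0)).Adj a b →
      u a = u b := by
    intro a b hab
    rw [SimpleGraph.fromRel_adj] at hab
    obtain ⟨-, hA⟩ := hab
    have hAab : A a b ≠ 0 := by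
      rcases hA with h | h
      · exact h
      · rw [hsymm]; exact h
    have := hterm a b
    have h2 : (u a - u b) ^ 2 = 0 := by
      rcases mul_eq_zero.1 this with h | h
      · exact absurd h hAab
      · exact h
    have := pow_eq_zero_iff (n := 2) (by norm_num) |>.1 h2
    linarith [this]
  obtain ⟨w⟩ := hconn.preconnected i j
  exact walk_const u hadj w
open Matrix RealInnerProductSpace

lemma lap_spec_bound {N : ℕ} (hN : 0 < N) (L : Matrix (Fin N) (Fin N) ℝ)
    (hherm : L.IsHermitian)
    (hker : ∀ u : Fin N → ℝ, L *ᵥ u = 0 → ∀ i j, u i = u j)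
    (lam2 : ℝ) (hlam2pos : 0 < lam2)
    (hlam2min : ∀ μ : ℝ, μ ≠ 0 → (∃ w : Fin N → ℝ, w ≠ 0 ∧ L *ᵥ w = μ • w) → lam2 ≤ μ)
    (y : Fin N → ℝ) :
    lam2 * (∑ i, (y i - (∑ j, y j) / N) ^ 2) ≤ y ⬝ᵥ (L *ᵥ y) := by
  classical
  have B := hherm.eigenvectorBasis
  set B := hherm.eigenvectorBasis with hB
  have hNR : (0:ℝ) < (N:ℝ) := by exact_mod_cast hN
  have hinner : ∀ a b : EuclideanSpace ℝ (Fin N), ⟪a, b⟫ = ∑ i, a i * b i := by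
    intro a b
    simp [PiLp.inner_apply, RCLike.inner_apply, mul_comm]
  have hsym : ∀ i j, L i j = L j i := by
    intro i j
    conv_lhs => rw [← hherm]
    simp [Matrix.conjTranspose_apply]
  set Y : EuclideanSpace ℝ (Fin N) := WithLp.toLp 2 y with hY
  have hck : ∀ k, B.repr Y k = ∑ i, B k i * y i := by
    intro k
    rw [B.repr_apply_apply, hinner]
  have hnormsq : ∀ k, ∑ i, (B k i) ^ 2 = 1 := by
    intro k
    have h1 : ⟪(B k : EuclideanSpace ℝ (Fin N)), B k⟫ = 1 := by
      rw [real_inner_self_eq_norm_sq, B.orthonormal.1 k]; norm_num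
    rw [hinner] at h1
    simpa [sq] using h1
  -- Parseval
  have hpars : ∑ k, (B.repr Y k) ^ 2 = ∑ i, y i ^ 2 := by
    have h1 : ⟪B.repr Y, B.repr Y⟫ = ⟪Y, Y⟫ := B.repr.inner_map_map Y Y
    rw [hinner (B.repr Y) (B.repr Y), hinner Y Y] at h1
    simpa [sq] using h1
  -- quadratic form in eigenbasis
  have hquad : y ⬝ᵥ (L *ᵥ y) = ∑ k, hherm.eigenvalues k * (B.repr Y k) ^ 2 := by
    have hZ : ∀ k, B.repr (WithLp.toLp 2 (L *ᵥ y) : EuclideanSpace ℝ (Fin N)) k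
        = hherm.eigenvalues k * B.repr Y k := by
      intro k
      rw [B.repr_apply_apply, hinner]
      have hswap : ∀ i : Fin N, (L *ᵥ y) i = ∑ j, y j * L j i := by
        intro i
        simp [Matrix.mulVec, dotProduct]
        congr 1; ext j
        rw [hsym i j]; ring
      calc ∑ i, B k i * (WithLp.toLp 2 (L *ᵥ y) : EuclideanSpace ℝ (Fin N)) i
          = ∑ i, ∑ j, B k i * L i j * y j := by
            congr 1; ext i
            simp [Matrix.mulVec, dotProduct, Finset.mul_sum, mul_assoc]
        _ = ∑ j, (∑ i, L j i * B k i) * y j := by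
            rw [Finset.sum_comm]
            congr 1; ext j
            rw [Finset.sum_mul]
            congr 1; ext i
            rw [hsym j i]; ring
        _ = ∑ j, (hherm.eigenvalues k * B k j) * y j := by
            congr 1; ext j
            congr 1
            have := congrFun (hherm.mulVec_eigenvectorBasis k) j
            simpa [Matrix.mulVec, dotProduct, hB] using this
        _ = hherm.eigenvalues k * B.repr Y k := by
            rw [hck k, Finset.mul_sum]
            congr 1; ext j; ring
    have h1 : ⟪B.repr Y, B.repr (WithLp.toLp 2 (L *ᵥ y) : EuclideanSpace ℝ (Fin N))⟫
        = ⟪Y, (WithLp.toLp 2 (L *ᵥ y) : EuclideanSpace ℝ (Fin N))⟫ := B.repr.inner_map_map _ _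
    rw [hinner, hinner] at h1
    have h2 : y ⬝ᵥ (L *ᵥ y) = ∑ i, Y i * (WithLp.toLp 2 (L *ᵥ y) : EuclideanSpace ℝ (Fin N)) i := rfl
    rw [h2, ← h1]
    congr 1; ext k
    rw [hZ k]; ring
  -- zero eigenvalue analysis
  have hzero : ∀ k, hherm.eigenvalues k = 0 →
      (B.repr Y k) ^ 2 = (∑ j, y j) ^ 2 / N := by
    intro k hk
    have hLB : L *ᵥ ⇑(B k) = 0 := by
      have := hherm.mulVec_eigenvectorBasis k
      rw [hk] at this
      simpa [hB] using this
    have hconst := hker (⇑(B k)) hLB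
    set a : ℝ := B k ⟨0, hN⟩ with ha
    have hconst' : ∀ i, B k i = a := fun i => hconst i ⟨0, hN⟩
    have hnorm : ∑ i, (B k i) ^ 2 = 1 := hnormsq k
    have hNa : (N:ℝ) * a ^ 2 = 1 := by
      rw [← hnorm]
      rw [Finset.sum_congr rfl (fun i _ => by rw [hconst' i])]
      rw [Finset.sum_const]; simp [mul_comm]
    have hckval : B.repr Y k = a * ∑ j, y j := by
      rw [hck k, Finset.mul_sum]
      congr 1; ext j
      rw [hconst' j]
    rw [hckval]
    have : a ^ 2 = 1 / N := by field_simp at hNa ⊢; linarith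
    rw [mul_pow, this]; ring
  -- at most one zero eigenvalue
  have huniq : ∀ k l, hherm.eigenvalues k = 0 → hherm.eigenvalues l = 0 → k = l := by
    intro k l hk hl
    by_contra hkl
    have ho : ⟪(B k : EuclideanSpace ℝ (Fin N)), B l⟫ = 0 := B.orthonormal.2 hkl
    rw [hinner] at ho
    -- both constant
    have hLBk : L *ᵥ ⇑(B k) = 0 := by
      have := hherm.mulVec_eigenvectorBasis k
      rw [hk] at this; simpa [hB] using this
    have hLBl : L *ᵥ ⇑(B l) = 0 := by
      have := hherm.mulVec_eigenvectorBasis l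
      rw [hl] at this; simpa [hB] using this
    have hconstk : ∀ i, B k i = B k ⟨0, hN⟩ := fun i => hker _ hLBk i ⟨0, hN⟩
    have hconstl : ∀ i, B l i = B l ⟨0, hN⟩ := fun i => hker _ hLBl i ⟨0, hN⟩
    set a := B k ⟨0, hN⟩
    set b := B l ⟨0, hN⟩
    have hsum : ∑ i : Fin N, B k i * B l i = N * (a * b) := by
      rw [Finset.sum_congr rfl (fun i _ => by rw [hconstk i, hconstl i])]
      rw [Finset.sum_const]; simp [mul_comm]
    rw [hsum] at ho
    -- a,b nonzero via norms
    have hnormk : ∑ i, (B k i) ^ 2 = 1 := hnormsq k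
    have hnorml : ∑ i, (B l i) ^ 2 = 1 := hnormsq l
    have hNa : (N:ℝ) * a ^ 2 = 1 := by
      rw [← hnormk]
      rw [Finset.sum_congr rfl (fun i _ => by rw [hconstk i])]
      rw [Finset.sum_const]; simp [mul_comm]
    have hNb : (N:ℝ) * b ^ 2 = 1 := by
      rw [← hnorml]
      rw [Finset.sum_congr rfl (fun i _ => by rw [hconstl i])]
      rw [Finset.sum_const]; simp [mul_comm]
    have ha0 : a ≠ 0 := by intro h; rw [h] at hNa; simp at hNa
    have hb0 : b ≠ 0 := by intro h; rw [h] at hNb; simp at hNb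
    exact (mul_ne_zero (ne_of_gt hNR) (mul_ne_zero ha0 hb0)) ho
  -- final assembly
  show lam2 * (∑ i, (y i - (∑ j, y j) / N) ^ 2) ≤ y ⬝ᵥ (L *ᵥ y)
  rw [hquad]
  set S := Finset.univ.filter (fun k => hherm.eigenvalues k = 0) with hS
  have hsplit : ∑ k, hherm.eigenvalues k * B.repr Y k ^ 2
      = ∑ k ∈ Sᶜ, hherm.eigenvalues k * B.repr Y k ^ 2 := by
    rw [← Finset.sum_add_sum_compl S]
    have h0 : ∑ k ∈ S, hherm.eigenvalues k * B.repr Y k ^ 2 = 0 :=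
      Finset.sum_eq_zero (fun k hk => by
        rw [(Finset.mem_filter.1 hk).2, zero_mul])
    rw [h0, zero_add]
  have hge : ∀ k ∈ Sᶜ, lam2 * B.repr Y k ^ 2 ≤ hherm.eigenvalues k * B.repr Y k ^ 2 := by
    intro k hk
    have hkne : hherm.eigenvalues k ≠ 0 := by
      have := Finset.mem_compl.1 hk
      simpa [hS] using this
    have hBne : ⇑(B k) ≠ (0 : Fin N → ℝ) := by
      intro h
      have h0 : (B k : EuclideanSpace ℝ (Fin N)) = 0 := by simpa using congrArg (WithLp.toLp 2) h
      have := B.orthonormal.1 k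
      rw [h0, norm_zero] at this
      norm_num at this
    have hlb := hlam2min _ hkne ⟨⇑(B k), hBne, by
      rw [hherm.mulVec_eigenvectorBasis k]⟩
    exact mul_le_mul_of_nonneg_right hlb (sq_nonneg _)
  have hcard : S.card ≤ 1 :=
    Finset.card_le_one.2 (fun k hk l hl =>
      huniq k l (Finset.mem_filter.1 hk).2 (Finset.mem_filter.1 hl).2)
  have hSsum : ∑ k ∈ S, B.repr Y k ^ 2 ≤ (∑ j, y j) ^ 2 / N := by
    have heach : ∀ k ∈ S, B.repr Y k ^ 2 = (∑ j, y j) ^ 2 / N :=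
      fun k hk => hzero k (Finset.mem_filter.1 hk).2
    rw [Finset.sum_congr rfl heach, Finset.sum_const]
    have : (0:ℝ) ≤ (∑ j, y j) ^ 2 / N := by positivity
    calc S.card • ((∑ j, y j) ^ 2 / N) = S.card * ((∑ j, y j) ^ 2 / N) := by
          simp
      _ ≤ 1 * ((∑ j, y j) ^ 2 / N) := by
          apply mul_le_mul_of_nonneg_right _ this
          exact_mod_cast hcard
      _ = (∑ j, y j) ^ 2 / N := one_mul _
  have hcomp : ∑ k ∈ Sᶜ, B.repr Y k ^ 2 = ∑ k, B.repr Y k ^ 2 - ∑ k ∈ S, B.repr Y k ^ 2 := by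
    rw [← Finset.sum_add_sum_compl S (fun k => B.repr Y k ^ 2)]
    ring
  have hexp : ∑ i, (y i - (∑ j, y j) / N) ^ 2 = ∑ i, y i ^ 2 - (∑ j, y j) ^ 2 / N := by
    have h1 : ∀ i : Fin N, (y i - (∑ j, y j) / N) ^ 2
        = y i ^ 2 - 2 * ((∑ j, y j) / N) * y i + ((∑ j, y j) / N) ^ 2 := fun i => by ring
    rw [Finset.sum_congr rfl (fun i _ => h1 i)]
    rw [Finset.sum_add_distrib, Finset.sum_sub_distrib, Finset.sum_const, ← Finset.mul_sum]
    simp only [Finset.card_univ, Fintype.card_fin, nsmul_eq_mul]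
    field_simp
    ring
  calc lam2 * ∑ i, (y i - (∑ j, y j) / N) ^ 2
      = lam2 * (∑ i, y i ^ 2 - (∑ j, y j) ^ 2 / N) := by rw [hexp]
    _ ≤ lam2 * (∑ k, B.repr Y k ^ 2 - ∑ k ∈ S, B.repr Y k ^ 2) := by
        apply mul_le_mul_of_nonneg_left _ (le_of_lt hlam2pos)
        rw [hpars]
        linarith [hSsum]
    _ = ∑ k ∈ Sᶜ, lam2 * B.repr Y k ^ 2 := by rw [← Finset.mul_sum, hcomp]
    _ ≤ ∑ k ∈ Sᶜ, hherm.eigenvalues k * B.repr Y k ^ 2 := Finset.sum_le_sum hge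
    _ = ∑ k, hherm.eigenvalues k * B.repr Y k ^ 2 := hsplit.symm

lemma kron_expand {N n : ℕ} (L : Matrix (Fin N) (Fin N) ℝ) (vec : Fin N × Fin n → ℝ) :
    vec ⬝ᵥ ((L ⊗ₖ (1 : Matrix (Fin n) (Fin n) ℝ)) *ᵥ vec)
    = ∑ k : Fin n, (fun i => vec (i, k)) ⬝ᵥ (L *ᵥ fun i => vec (i, k)) := by
  simp only [dotProduct, mulVec, kroneckerMap_apply, one_apply, Fintype.sum_prod_type,
    mul_ite, mul_one, mul_zero, ite_mul, zero_mul, Finset.sum_ite_eq, Finset.mem_univ,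
    if_pos, if_true]
  rw [Finset.sum_comm]



theorem VM_laplacian_bound (n N : ℕ) (hN : 0 < N)
    (f : Fin N → EuclideanSpace ℝ (Fin n) → ℝ)
    (γ Γ : Fin N → ℝ) (hγ : ∀ i, 0 < γ i) (hΓ : ∀ i, 0 < Γ i)
    (hf : ∀ i, ContDiff ℝ 2 (f i))
    (hhessl : ∀ i, ∀ y v : EuclideanSpace ℝ (Fin n),
      γ i * ‖v‖ ^ 2 ≤ iteratedFDeriv ℝ 2 (f i) y ![v, v])
    (hhessu : ∀ i, ∀ y v : EuclideanSpace ℝ (Fin n),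
      iteratedFDeriv ℝ 2 (f i) y ![v, v] ≤ Γ i * ‖v‖ ^ 2)
    (x : Fin N → EuclideanSpace ℝ (Fin n))
    (hzgs : ∑ i, gradient (f i) (x i) = 0)
    (xstar : EuclideanSpace ℝ (Fin n))
    (hmin : ∀ y, ∑ i, f i xstar ≤ ∑ i, f i y)
    (A : Matrix (Fin N) (Fin N) ℝ)
    (hsymm : ∀ i j, A i j = A j i) (hnonneg : ∀ i j, 0 ≤ A i j)
    (hconn : (SimpleGraph.fromRel (fun i j : Fin N => A i j ≠ 0)).Connected)
    (L : Matrix (Fin N) (Fin N) ℝ)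
    (hL : L = Matrix.diagonal (fun i => ∑ j, A i j) - A)
    (lam2 : ℝ) (hlam2pos : 0 < lam2)
    (hlam2eig : ∃ v : Fin N → ℝ, v ≠ 0 ∧ L *ᵥ v = lam2 • v)
    (hlam2min : ∀ μ : ℝ, μ ≠ 0 → (∃ w : Fin N → ℝ, w ≠ 0 ∧ L *ᵥ w = μ • w) → lam2 ≤ μ)
    (Γmax : ℝ) (hΓmax : IsGreatest (Set.range Γ) Γmax)
    (VM : ℝ)
    (hVM : VM = ∑ i, (f i xstar - f i (x i) - ⟪gradient (f i) (x i), xstar - x i⟫))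
    (vec : Fin N × Fin n → ℝ) (hvec : ∀ p, vec p = x p.1 p.2) :
    VM ≤ (Γmax / lam2) * (vec ⬝ᵥ ((L ⊗ₖ (1 : Matrix (Fin n) (Fin n) ℝ)) *ᵥ vec)) := by
  have hNR : (0:ℝ) < (N:ℝ) := by exact_mod_cast hN
  have hΓmaxpos : 0 < Γmax := lt_of_lt_of_le (hΓ ⟨0, hN⟩) (hΓmax.2 ⟨⟨0, hN⟩, rfl⟩)
  set xbar : EuclideanSpace ℝ (Fin n) := (N:ℝ)⁻¹ • ∑ i, x i with hxbar
  have hgrad : ∀ i (w : EuclideanSpace ℝ (Fin n)),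
      ⟪gradient (f i) (x i), w⟫ = fderiv ℝ (f i) (x i) w := by
    intro i w; rw [gradient]; exact InnerProductSpace.toDual_symm_apply
  have hzgs' : ∀ w : EuclideanSpace ℝ (Fin n), ∑ i, ⟪gradient (f i) (x i), w⟫ = 0 := by
    intro w
    rw [← sum_inner, hzgs, inner_zero_left]
  have key : ∀ z : EuclideanSpace ℝ (Fin n),
      ∑ i, (f i z - f i (x i) - ⟪gradient (f i) (x i), z - x i⟫)
      = (∑ i, f i z) + ∑ i, (⟪gradient (f i) (x i), x i⟫ - f i (x i)) := by
    intro z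
    have h0 : ∑ i, (f i z - f i (x i) - ⟪gradient (f i) (x i), z - x i⟫)
        = ∑ i, ((f i z + (⟪gradient (f i) (x i), x i⟫ - f i (x i)))
            - ⟪gradient (f i) (x i), z⟫) := by
      congr 1; ext i; rw [inner_sub_right]; ring
    rw [h0, Finset.sum_sub_distrib, hzgs' z, sub_zero, Finset.sum_add_distrib]
  have step1 : VM ≤ ∑ i, (f i xbar - f i (x i) - ⟪gradient (f i) (x i), xbar - x i⟫) := by
    rw [hVM, key xstar, key xbar]
    exact add_le_add_left (hmin xbar) _
  have step2 : ∀ i, f i xbar - f i (x i) - ⟪gradient (f i) (x i), xbar - x i⟫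
      ≤ Γmax / 2 * ‖xbar - x i‖ ^ 2 := by
    intro i
    have ht := taylor_upper (f i) (hf i) (Γ i) (hhessu i) (x i) xbar
    rw [← hgrad i (xbar - x i)] at ht
    have hle : Γ i / 2 * ‖xbar - x i‖ ^ 2 ≤ Γmax / 2 * ‖xbar - x i‖ ^ 2 := by
      apply mul_le_mul_of_nonneg_right _ (sq_nonneg _)
      have := hΓmax.2 ⟨i, rfl⟩
      linarith
    linarith
  have hnorm2 : ∀ w : EuclideanSpace ℝ (Fin n), ‖w‖ ^ 2 = ∑ k, w k ^ 2 := by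
    intro w
    rw [EuclideanSpace.norm_eq, Real.sq_sqrt (by positivity)]
    congr 1; ext k; rw [Real.norm_eq_abs, sq_abs]
  set T : ℝ := ∑ i, ‖xbar - x i‖ ^ 2 with hT
  have stepA : VM ≤ Γmax / 2 * T := by
    calc VM ≤ ∑ i, (f i xbar - f i (x i) - ⟪gradient (f i) (x i), xbar - x i⟫) := step1
      _ ≤ ∑ i, Γmax / 2 * ‖xbar - x i‖ ^ 2 := Finset.sum_le_sum (fun i _ => step2 i)
      _ = Γmax / 2 * T := by rw [hT, Finset.mul_sum]
  -- Laplacian side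
  have hherm : L.IsHermitian := by
    rw [hL]
    ext i j
    simp only [conjTranspose_apply, Matrix.sub_apply, Matrix.diagonal_apply, star_trivial]
    rw [hsymm j i]
    by_cases h : i = j
    · subst h; simp
    · simp [h, Ne.symm h]
  have hker := lap_kernel_const A hsymm hnonneg hconn L hL
  set Q : ℝ := vec ⬝ᵥ ((L ⊗ₖ (1 : Matrix (Fin n) (Fin n) ℝ)) *ᵥ vec) with hQdef
  have hQ : lam2 * T ≤ Q := by
    have hkron := kron_expand L vec
    have hcomp : ∀ k : Fin n,
        lam2 * (∑ i, (vec (i, k) - (∑ j, vec (j, k)) / N) ^ 2)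
        ≤ (fun i => vec (i, k)) ⬝ᵥ (L *ᵥ fun i => vec (i, k)) :=
      fun k => lap_spec_bound hN L hherm hker lam2 hlam2pos hlam2min _
    have hbar : ∀ (k : Fin n), xbar k = (∑ j, vec (j, k)) / N := by
      intro k
      rw [hxbar]
      have : (∑ i, x i : EuclideanSpace ℝ (Fin n)) k = ∑ i, x i k := by
        induction (Finset.univ : Finset (Fin N)) using Finset.induction with
        | empty => rfl
        | insert _ _ hnot ih => rw [Finset.sum_insert hnot, Finset.sum_insert hnot, ← ih]; rfl
      simp only [PiLp.smul_apply, smul_eq_mul, this]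
      rw [div_eq_inv_mul]
      congr 1
      exact Finset.sum_congr rfl (fun j _ => (hvec (j, k)).symm)
    have hTsum : T = ∑ k : Fin n, ∑ i, (vec (i, k) - (∑ j, vec (j, k)) / N) ^ 2 := by
      rw [hT]
      rw [Finset.sum_comm]
      congr 1; ext i
      rw [hnorm2]
      congr 1; ext k
      rw [← hbar k, hvec (i, k)]
      have : (xbar - x i : EuclideanSpace ℝ (Fin n)) k = xbar k - x i k := rfl
      rw [this]; ring
    rw [hQdef, hkron, hTsum, Finset.mul_sum]
    exact Finset.sum_le_sum (fun k _ => hcomp k)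
  have hT0 : 0 ≤ T := Finset.sum_nonneg (fun i _ => sq_nonneg _)
  have hQ0 : 0 ≤ Q := le_trans (by positivity) hQ
  have hTQ : T ≤ Q / lam2 := by rw [le_div_iff₀ hlam2pos, mul_comm]; exact hQ
  calc VM ≤ Γmax / 2 * T := stepA
    _ ≤ Γmax / 2 * (Q / lam2) := mul_le_mul_of_nonneg_left hTQ (by positivity)
    _ ≤ Γmax / lam2 * Q := by
        have h1 : Γmax / 2 * (Q / lam2) = Γmax / lam2 * Q / 2 := by ring
        have h2 : 0 ≤ Γmax / lam2 * Q := by positivity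
        linarith
end

section
/- Suppose V : [t0, t0+T) → ℝ is nonnegative and differentiable, ϱ(t) = T^h/(T+t0−t)^h with h, T > 0, and V̇(t) ≤ −κ₁ (ϱ'(t)/ϱ(t)) σ V(t) with κ₁, σ > 0. If additionally V(t) ≥ (γ/2)‖x(t) − x*‖² for some γ > 0 and continuous x : [t0, t0+T) → ℝⁿ, then x(t) → x* as t → (t0+T)⁻. -/
open Set Filter

theorem prescribed_time_state_convergence (n : ℕ) (T h t0 κ₁ σ γ : ℝ)
    (hT : 0 < T) (hh : 0 < h) (hκ₁ : 0 < κ₁) (hσ : 0 < σ) (hγ : 0 < γ)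
    (ϱ : ℝ → ℝ) (hϱ : ∀ t ∈ Ico t0 (t0 + T), ϱ t = T ^ h / (T + t0 - t) ^ h)
    (V V' : ℝ → ℝ) (hVnonneg : ∀ t ∈ Ico t0 (t0 + T), 0 ≤ V t)
    (hVderiv : ∀ t ∈ Ico t0 (t0 + T), HasDerivWithinAt V (V' t) (Ico t0 (t0 + T)) t)
    (hVineq : ∀ t ∈ Ico t0 (t0 + T), V' t ≤ -κ₁ * (h / (T + t0 - t)) * σ * V t)
    (x : ℝ → EuclideanSpace ℝ (Fin n)) (hx : ContinuousOn x (Ico t0 (t0 + T)))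
    (xstar : EuclideanSpace ℝ (Fin n))
    (hlower : ∀ t ∈ Ico t0 (t0 + T), (γ / 2) * ‖x t - xstar‖ ^ 2 ≤ V t) :
    Tendsto x (nhdsWithin (t0 + T) (Iio (t0 + T))) (nhds xstar) := by
  set c : ℝ := κ₁ * h * σ with hc
  have hcpos : 0 < c := by positivity
  set u : ℝ → ℝ := fun t => T + t0 - t with hu
  have hupos : ∀ t ∈ Ico t0 (t0 + T), 0 < u t := fun t ht => by
    simp only [hu]; cases' ht with h1 h2; linarith
  set g : ℝ → ℝ := fun t => V t * u t ^ (-c) with hg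
  -- g is antitone on Ico
  have hVcont : ContinuousOn V (Ico t0 (t0 + T)) := fun t ht =>
    (hVderiv t ht).continuousWithinAt
  have hgcont : ContinuousOn g (Ico t0 (t0 + T)) := by
    apply hVcont.mul
    apply ContinuousOn.rpow_const
    · exact (continuous_const.sub continuous_id).continuousOn
    · intro t ht; left; exact (hupos t ht).ne'
  have hint : interior (Ico t0 (t0 + T)) = Ioo t0 (t0 + T) := interior_Ico
  have hganti : AntitoneOn g (Ico t0 (t0 + T)) := by
    apply antitoneOn_of_hasDerivWithinAt_nonpos (convex_Ico _ _) hgcont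
      (f' := fun t => V' t * u t ^ (-c) + V t * (c * u t ^ (-c - 1)))
    · intro t ht
      rw [hint] at ht ⊢
      have ht' : t ∈ Ico t0 (t0 + T) := Ioo_subset_Ico_self ht
      have hut : 0 < u t := hupos t ht'
      have hdu : HasDerivWithinAt u (-1) (Ioo t0 (t0 + T)) t := by
        simpa using ((hasDerivAt_id t).const_sub (T + t0)).hasDerivWithinAt
      have hdur : HasDerivWithinAt (fun s => u s ^ (-c))
          (c * u t ^ (-c - 1)) (Ioo t0 (t0 + T)) t := by
        have := (Real.hasDerivAt_rpow_const (x := u t) (p := -c) (Or.inl hut.ne')).comp_hasDerivWithinAt t hdu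
        rw [show c * u t ^ (-c - 1) = -c * u t ^ (-c - 1) * -1 by ring]; exact this
      have hdV : HasDerivWithinAt V (V' t) (Ioo t0 (t0 + T)) t :=
        (hVderiv t ht').mono (by rw [← hint]; exact interior_subset)
      exact hdV.mul hdur
    · intro t ht
      rw [hint] at ht
      have ht' : t ∈ Ico t0 (t0 + T) := Ioo_subset_Ico_self ht
      have hut : 0 < u t := hupos t ht'
      have h1 : V' t ≤ -(c / u t) * V t := by
        have heq : -(c / u t) * V t = -κ₁ * (h / (T + t0 - t)) * σ * V t := by
          show -(κ₁ * h * σ / (T + t0 - t)) * V t = _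
          rw [div_eq_mul_inv, div_eq_mul_inv]; ring
        rw [heq]; exact hVineq t ht'
      have h2 : V' t * u t ^ (-c) ≤ -(c / u t) * V t * u t ^ (-c) :=
        mul_le_mul_of_nonneg_right h1 (Real.rpow_nonneg hut.le _)
      have h3 : -(c / u t) * V t * u t ^ (-c) = -(V t * (c * u t ^ (-c - 1))) := by
        rw [Real.rpow_sub_one hut.ne', div_eq_mul_inv, div_eq_mul_inv]
        ring
      linarith [h2, h3 ▸ h2]
  -- V bound
  have ht0mem : t0 ∈ Ico t0 (t0 + T) := ⟨le_refl _, by linarith⟩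
  have hVbound : ∀ t ∈ Ico t0 (t0 + T), V t ≤ g t0 * u t ^ c := by
    intro t ht
    have hgt : g t ≤ g t0 := hganti ht0mem ht ht.1
    have hut : 0 < u t := hupos t ht
    have := mul_le_mul_of_nonneg_right hgt (Real.rpow_nonneg hut.le c)
    calc V t = V t * u t ^ (-c) * u t ^ c := by
          rw [mul_assoc, ← Real.rpow_add hut, neg_add_cancel, Real.rpow_zero, mul_one]
      _ = g t * u t ^ c := rfl
      _ ≤ g t0 * u t ^ c := this
  -- squeeze the norm squared
  have hmemIco : ∀ᶠ t in nhdsWithin (t0 + T) (Iio (t0 + T)), t ∈ Ico t0 (t0 + T) := by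
    filter_upwards [Ioo_mem_nhdsLT_of_mem (⟨by linarith, le_refl _⟩ : t0 + T ∈ Ioc t0 (t0 + T))]
      with t ht using Ioo_subset_Ico_self ht
  have hbnd_tendsto : Tendsto (fun t => (2 / γ) * (g t0 * u t ^ c))
      (nhdsWithin (t0 + T) (Iio (t0 + T))) (nhds 0) := by
    have hu0 : Tendsto u (nhdsWithin (t0 + T) (Iio (t0 + T))) (nhds 0) := by
      have : ContinuousAt u (t0 + T) := (continuous_const.sub continuous_id).continuousAt
      have h0 : u (t0 + T) = 0 := by show T + t0 - (t0 + T) = 0; ring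
      exact h0 ▸ this.continuousWithinAt.tendsto
    have hrpow : Tendsto (fun t => u t ^ c) (nhdsWithin (t0 + T) (Iio (t0 + T))) (nhds 0) := by
      have hcont : ContinuousAt (fun y : ℝ => y ^ c) 0 :=
        Real.continuousAt_rpow_const 0 c (Or.inr hcpos.le)
      have := hcont.tendsto.comp hu0
      simpa [Real.zero_rpow hcpos.ne', Function.comp_def] using this
    simpa using (hrpow.const_mul (2 / γ * g t0)).congr (fun t => by ring)
  have hsq : Tendsto (fun t => ‖x t - xstar‖ ^ 2)
      (nhdsWithin (t0 + T) (Iio (t0 + T))) (nhds 0) := by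
    apply squeeze_zero' (by filter_upwards with t using by positivity)
    · filter_upwards [hmemIco] with t ht
      have h1 := hlower t ht
      have h2 := hVbound t ht
      have : (γ / 2) * ‖x t - xstar‖ ^ 2 ≤ g t0 * u t ^ c := le_trans h1 h2
      calc ‖x t - xstar‖ ^ 2 = (2 / γ) * ((γ / 2) * ‖x t - xstar‖ ^ 2) := by
            field_simp
        _ ≤ (2 / γ) * (g t0 * u t ^ c) := by
            apply mul_le_mul_of_nonneg_left this (by positivity)
    · exact hbnd_tendsto
  have hnorm : Tendsto (fun t => ‖x t - xstar‖)
      (nhdsWithin (t0 + T) (Iio (t0 + T))) (nhds 0) := by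
    have heq : (fun t => ‖x t - xstar‖) =
        (fun s => Real.sqrt s) ∘ (fun t => ‖x t - xstar‖ ^ 2) :=
      funext fun t => (Real.sqrt_sq (norm_nonneg _)).symm
    rw [heq]
    have := (Real.continuous_sqrt.continuousAt (x := 0)).tendsto.comp hsq
    simpa using this
  rw [tendsto_iff_norm_sub_tendsto_zero]
  exact hnorm
end
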